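/- Let u ∈ ℝ and set s_k = 2πik/log 2 for k ∈ ℤ. Then the family (over k ∈ ℤ, k ≠ 0) of terms (π / sin(π(s_k − 1))) · e^{-2πiku} is absolutely summable, and Σ_{k ∈ ℤ, k ≠ 0} (π / sin(π(s_k − 1))) e^{-2πiku} = 2π Σ_{k=1}^∞ sin(2πku) / sinh(2π²k / log 2), where the series on the right converges absolutely. -/

import Mathlib

open Real Filter Topology

private lemma aux_denom (k : ℤ) :
    Complex.sin ((π : ℂ) * (2 * (π : ℂ) * Complex.I * (k : ℂ) / (Real.log 2 : ℂ) - 1))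
      = -((Real.sinh (2 * π ^ 2 * (k : ℝ) / Real.log 2) : ℝ) : ℂ) * Complex.I := by
  have hl : (Real.log 2 : ℂ) ≠ 0 := by
    exact_mod_cast (Real.log_pos one_lt_two).ne'
  have h1 : (π : ℂ) * (2 * (π : ℂ) * Complex.I * (k : ℂ) / (Real.log 2 : ℂ) - 1)
      = ((2 * π ^ 2 * (k : ℝ) / Real.log 2 : ℝ) : ℂ) * Complex.I - (π : ℂ) := by
    push_cast
    field_simp
  rw [h1, Complex.sin_sub, Complex.cos_pi, Complex.sin_pi, Complex.sin_mul_I,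
    Complex.ofReal_sinh]
  ring

private lemma aux_exp (k : ℤ) (u : ℝ) :
    Complex.exp (-(2 * (π : ℂ) * Complex.I * (k : ℂ) * (u : ℂ)))
      = Complex.exp (((-(2 * π * (k : ℝ) * u) : ℝ) : ℂ) * Complex.I) := by
  congr 1
  push_cast
  ring

private lemma norm_f (k : ℤ) (u : ℝ) :
    ‖(π : ℂ) / Complex.sin ((π : ℂ) *
        (2 * (π : ℂ) * Complex.I * (k : ℂ) / (Real.log 2 : ℂ) - 1)) *
        Complex.exp (-(2 * (π : ℂ) * Complex.I * (k : ℂ) * (u : ℂ)))‖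
      = π / |Real.sinh (2 * π ^ 2 * (k : ℝ) / Real.log 2)| := by
  rw [aux_denom, aux_exp, norm_mul, norm_div]
  have h1 : ‖-((Real.sinh (2 * π ^ 2 * (k:ℝ) / Real.log 2) : ℝ) : ℂ) * Complex.I‖
      = |Real.sinh (2 * π ^ 2 * (k:ℝ) / Real.log 2)| := by
    rw [norm_mul, Complex.norm_I, mul_one, norm_neg, Complex.norm_real, Real.norm_eq_abs]
  have h2 : ‖Complex.exp (((-(2 * π * (k:ℝ) * u) : ℝ) : ℂ) * Complex.I)‖ = 1 := by
    rw [Complex.norm_exp_ofReal_mul_I]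
  have h3 : ‖(π : ℂ)‖ = π := by
    rw [Complex.norm_real, Real.norm_eq_abs, _root_.abs_of_nonneg Real.pi_pos.le]
  rw [h1, h2, h3, mul_one]

private lemma sinh_lower {x : ℝ} (hx : Real.log 2 ≤ x) :
    Real.exp x / 4 ≤ Real.sinh x := by
  rw [Real.sinh_eq]
  have h2 : (2 : ℝ) ≤ Real.exp x := by
    calc (2:ℝ) = Real.exp (Real.log 2) := by rw [Real.exp_log]; norm_num
    _ ≤ Real.exp x := Real.exp_le_exp.2 hx
  have h0 : (0:ℝ) ≤ x := le_trans (Real.log_nonneg one_le_two) hx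
  have h3 : Real.exp (-x) ≤ 1 := by
    rw [Real.exp_le_one_iff]; linarith
  linarith

private lemma log2_lt_a : Real.log 2 ≤ 2 * π ^ 2 / Real.log 2 := by
  have h1 : Real.log 2 < 1 := by
    have := Real.log_two_lt_d9
    linarith
  have h0 : 0 < Real.log 2 := Real.log_pos one_lt_two
  have hp : (3:ℝ) < π := Real.pi_gt_three
  rw [le_div_iff₀ h0]
  nlinarith

/-- summability of π / sinh(2π²(n+1)/log 2) -/
private lemma sum_base : Summable (fun n : ℕ => π / Real.sinh (2 * π ^ 2 * ((n : ℝ) + 1) / Real.log 2)) := by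
  set a : ℝ := 2 * π ^ 2 / Real.log 2 with ha
  have h0 : 0 < Real.log 2 := Real.log_pos one_lt_two
  have hap : 0 < a := by positivity
  have hr : Real.exp (-a) < 1 := Real.exp_lt_one_iff.2 (by linarith)
  have hgeo : Summable (fun n : ℕ => (4 * π * Real.exp (-a)) * Real.exp (-a) ^ n) :=
    (summable_geometric_of_lt_one (Real.exp_pos _).le hr).mul_left _
  refine hgeo.of_nonneg_of_le (fun n => by positivity) (fun n => ?_)
  have hx : Real.log 2 ≤ a * ((n : ℝ) + 1) := by
    calc Real.log 2 ≤ a := log2_lt_a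
    _ ≤ a * ((n : ℝ) + 1) := by nlinarith [Nat.cast_nonneg (α := ℝ) n]
  have hs : Real.exp (a * ((n : ℝ) + 1)) / 4 ≤ Real.sinh (a * ((n : ℝ) + 1)) := sinh_lower hx
  have heq : 2 * π ^ 2 * ((n : ℝ) + 1) / Real.log 2 = a * ((n : ℝ) + 1) := by
    rw [ha]; ring
  rw [heq]
  have hep : 0 < Real.exp (a * ((n : ℝ) + 1)) := Real.exp_pos _
  have hsp : 0 < Real.sinh (a * ((n : ℝ) + 1)) := lt_of_lt_of_le (by positivity) hs
  rw [div_le_iff₀ hsp]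
  have key : (4 * π * Real.exp (-a)) * Real.exp (-a) ^ n * (Real.exp (a * ((n:ℝ)+1)) / 4) = π := by
    have h1 : Real.exp (-a) * Real.exp ((n:ℝ) * -a) * Real.exp (a * ((n:ℝ)+1)) = 1 := by
      rw [← Real.exp_add, ← Real.exp_add,
        show -a + (n:ℝ) * -a + a * ((n:ℝ)+1) = 0 by ring, Real.exp_zero]
    rw [← Real.exp_nat_mul]
    linear_combination π * h1
  calc π = (4 * π * Real.exp (-a)) * Real.exp (-a) ^ n * (Real.exp (a * ((n:ℝ)+1)) / 4) := key.symm
  _ ≤ (4 * π * Real.exp (-a)) * Real.exp (-a) ^ n * Real.sinh (a * ((n:ℝ)+1)) := by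
      apply mul_le_mul_of_nonneg_left hs (by positivity)

private lemma pair_eq (u : ℝ) (n : ℕ) :
    ((π : ℂ) / Complex.sin ((π : ℂ) *
        (2 * (π : ℂ) * Complex.I * ((((n : ℤ) + 1) : ℤ) : ℂ) / (Real.log 2 : ℂ) - 1)) *
        Complex.exp (-(2 * (π : ℂ) * Complex.I * ((((n : ℤ) + 1) : ℤ) : ℂ) * (u : ℂ)))) +
    ((π : ℂ) / Complex.sin ((π : ℂ) *
        (2 * (π : ℂ) * Complex.I * (((-((n : ℤ) + 1)) : ℤ) : ℂ) / (Real.log 2 : ℂ) - 1)) *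
        Complex.exp (-(2 * (π : ℂ) * Complex.I * (((-((n : ℤ) + 1)) : ℤ) : ℂ) * (u : ℂ))))
    = 2 * (π : ℂ) * ((Real.sin (2 * π * ((n : ℝ) + 1) * u) /
          Real.sinh (2 * π ^ 2 * ((n : ℝ) + 1) / Real.log 2) : ℝ) : ℂ) := by
  have h0 : 0 < Real.log 2 := Real.log_pos one_lt_two
  set s : ℝ := Real.sinh (2 * π ^ 2 * ((n : ℝ) + 1) / Real.log 2) with hsdef
  have hsp : 0 < s := by
    rw [hsdef]; exact Real.sinh_pos_iff.2 (by positivity)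
  have hs : (s : ℂ) ≠ 0 := by exact_mod_cast hsp.ne'
  rw [aux_denom, aux_denom, aux_exp, aux_exp]
  have e1 : (2 * π ^ 2 * ((((n : ℤ) + 1) : ℤ) : ℝ) / Real.log 2) = 2 * π ^ 2 * ((n : ℝ) + 1) / Real.log 2 := by
    push_cast; ring
  have e2 : (2 * π ^ 2 * (((-((n : ℤ) + 1)) : ℤ) : ℝ) / Real.log 2) = -(2 * π ^ 2 * ((n : ℝ) + 1) / Real.log 2) := by
    push_cast; ring
  rw [e1, e2, Real.sinh_neg, ← hsdef]
  set θ : ℝ := 2 * π * ((n : ℝ) + 1) * u with hθ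
  have e3 : (-(2 * π * ((((n : ℤ) + 1) : ℤ) : ℝ) * u)) = -θ := by rw [hθ]; push_cast; ring
  have e4 : (-(2 * π * (((-((n : ℤ) + 1)) : ℤ) : ℝ) * u)) = θ := by rw [hθ]; push_cast; ring
  rw [e3, e4]
  rw [Complex.exp_mul_I, Complex.exp_mul_I, Complex.ofReal_neg, Complex.ofReal_neg, neg_neg,
    Complex.cos_neg, Complex.sin_neg, ← Complex.ofReal_cos, ← Complex.ofReal_sin,
    Complex.ofReal_div]
  have hI := Complex.I_ne_zero
  have hsq : Complex.I * Complex.I = -1 := Complex.I_mul_I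
  field_simp
  ring_nf

theorem stmt14 (u : ℝ) :
    Summable (fun k : ℤ => ‖(if k = 0 then (0 : ℂ) else
      (π : ℂ) / Complex.sin ((π : ℂ) *
        (2 * (π : ℂ) * Complex.I * (k : ℂ) / (Real.log 2 : ℂ) - 1)) *
        Complex.exp (-(2 * (π : ℂ) * Complex.I * (k : ℂ) * (u : ℂ))))‖) ∧
    Summable (fun k : ℕ =>
      |Real.sin (2 * π * ((k : ℝ) + 1) * u) /
        Real.sinh (2 * π ^ 2 * ((k : ℝ) + 1) / Real.log 2)|) ∧
    (∑' k : ℤ, (if k = 0 then (0 : ℂ) else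
      (π : ℂ) / Complex.sin ((π : ℂ) *
        (2 * (π : ℂ) * Complex.I * (k : ℂ) / (Real.log 2 : ℂ) - 1)) *
        Complex.exp (-(2 * (π : ℂ) * Complex.I * (k : ℂ) * (u : ℂ))))) =
      2 * (π : ℂ) * ∑' k : ℕ,
        ((Real.sin (2 * π * ((k : ℝ) + 1) * u) /
          Real.sinh (2 * π ^ 2 * ((k : ℝ) + 1) / Real.log 2) : ℝ) : ℂ) := by
  set f : ℤ → ℂ := fun k => (if k = 0 then (0 : ℂ) else
      (π : ℂ) / Complex.sin ((π : ℂ) *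
        (2 * (π : ℂ) * Complex.I * (k : ℂ) / (Real.log 2 : ℂ) - 1)) *
        Complex.exp (-(2 * (π : ℂ) * Complex.I * (k : ℂ) * (u : ℂ)))) with hf
  have h0 : 0 < Real.log 2 := Real.log_pos one_lt_two
  -- norm of f for any k
  have hnorm : ∀ k : ℤ, ‖f k‖ = if k = 0 then 0 else
      π / |Real.sinh (2 * π ^ 2 * (k : ℝ) / Real.log 2)| := by
    intro k
    by_cases hk : k = 0
    · simp [hf, hk]
    · simp only [hf, hk, if_false]
      exact norm_f k u
  have hsinh_pos : ∀ n : ℕ, 0 < Real.sinh (2 * π ^ 2 * ((n : ℝ) + 1) / Real.log 2) := by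
    intro n
    exact Real.sinh_pos_iff.2 (by positivity)
  -- the comparison sequence, shifted
  have hg : Summable (fun n : ℕ => ‖f (n : ℤ)‖) := by
    rw [← summable_nat_add_iff 1]
    apply Summable.congr sum_base
    intro n
    rw [hnorm]
    simp only [Nat.cast_add, Nat.cast_one, if_neg (by positivity : ((n : ℤ) + 1) ≠ 0)]
    rw [_root_.abs_of_pos]
    · norm_num
    · push_cast
      exact hsinh_pos n
  have hgneg : Summable (fun n : ℕ => ‖f (-(n : ℤ))‖) := by
    rw [← summable_nat_add_iff 1]
    apply Summable.congr sum_base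
    intro n
    rw [hnorm]
    have hne : (-(((n : ℕ) + 1 : ℕ) : ℤ)) ≠ 0 := by omega
    rw [if_neg hne]
    have hc : (((-(((n : ℕ) + 1 : ℕ) : ℤ)) : ℤ) : ℝ) = -((n : ℝ) + 1) := by push_cast; ring
    rw [hc, show 2 * π ^ 2 * -((n : ℝ) + 1) / Real.log 2
        = -(2 * π ^ 2 * ((n : ℝ) + 1) / Real.log 2) by ring,
      Real.sinh_neg, abs_neg, _root_.abs_of_pos (hsinh_pos n)]
  have h1 : Summable (fun k : ℤ => ‖f k‖) := Summable.of_nat_of_neg hg hgneg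
  have h2 : Summable (fun k : ℕ =>
      |Real.sin (2 * π * ((k : ℝ) + 1) * u) /
        Real.sinh (2 * π ^ 2 * ((k : ℝ) + 1) / Real.log 2)|) := by
    refine (sum_base.mul_left (1/π)).of_nonneg_of_le (fun n => abs_nonneg _) (fun n => ?_)
    rw [abs_div, _root_.abs_of_pos (hsinh_pos n)]
    rw [div_le_iff₀ (hsinh_pos n)]
    have : (1/π) * (π / Real.sinh (2 * π ^ 2 * ((n : ℝ) + 1) / Real.log 2)) *
        Real.sinh (2 * π ^ 2 * ((n : ℝ) + 1) / Real.log 2) = 1 := by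
      field_simp
    rw [this]
    exact abs_sin_le_one _
  refine ⟨h1, h2, ?_⟩
  -- summabilities of f on pieces
  have hfn : Summable (fun n : ℕ => f (n : ℤ)) := Summable.of_norm hg
  have hfneg : Summable (fun n : ℕ => f (-((n : ℤ) + 1))) := by
    apply Summable.of_norm
    have := (summable_nat_add_iff 1).2 hgneg
    apply Summable.congr this
    intro n
    push_cast
    ring_nf
  have hfn1 : Summable (fun n : ℕ => f ((n : ℤ) + 1)) := by
    have := (summable_nat_add_iff 1).2 hfn
    apply Summable.congr this
    intro n
    push_cast
    ring_nf
  have hzero : f 0 = 0 := by simp [hf]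
  rw [tsum_of_nat_of_neg_add_one hfn hfneg]
  have hshift : ∑' n : ℕ, f (n : ℤ) = ∑' n : ℕ, f ((n : ℤ) + 1) := by
    rw [Summable.tsum_eq_zero_add hfn]
    simp only [Nat.cast_zero, hzero, zero_add]
    apply tsum_congr
    intro n
    push_cast
    ring_nf
  rw [hshift, ← Summable.tsum_add hfn1 hfneg]
  have hterm : ∀ n : ℕ, f ((n : ℤ) + 1) + f (-((n : ℤ) + 1)) =
      2 * (π : ℂ) * ((Real.sin (2 * π * ((n : ℝ) + 1) * u) /
          Real.sinh (2 * π ^ 2 * ((n : ℝ) + 1) / Real.log 2) : ℝ) : ℂ) := by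
    intro n
    have hk1 : ((n : ℤ) + 1) ≠ 0 := by omega
    have hk2 : (-((n : ℤ) + 1)) ≠ 0 := by omega
    simp only [hf, if_neg hk1, if_neg hk2]
    exact pair_eq u n
  rw [tsum_congr hterm]
  rw [tsum_mul_left]
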